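/- (Fixed point of the iterated best response satisfies modified KKT stationarity implies Nash KKT stationarity.) Suppose (σ₁^l, σ₂^l) together with multipliers (μ_i^l, ν_i^l, λ_i^l) satisfies, for each i, the stationarity condition ∂f_i/∂σ_i + α_i λ_j^l ∂γ_j/∂σ_i - λ_i^l ∂γ_i/∂σ_i - μ_i^l ∂h_i/∂σ_i - ν_i^l ∂g_i/∂σ_i = 0 with λ_i^l, ν_i^l ≥ 0, complementary slackness λ_i^l γ_i = 0, ν_i^l g_i = 0, and feasibility. If γ₁ ≡ γ₂ as functions (so also their partial derivatives agree) and λ_i^l ≥ α_i λ_j^l componentwise for both i, then (σ₁^l, σ₂^l) with the modified multipliers λ_i^* = λ_i^l - α_i λ_j^l satisfies the KKT necessary conditions for a Nash equilibrium, namely: ∂f_i/∂σ_i - λ_i^* ∂γ_i/∂σ_i - μ_i^l ∂h_i/∂σ_i - ν_i^l ∂g_i/∂σ_i = 0, λ_i^* ≥ 0, and λ_i^* γ_i(σ_i^l, σ_j^l) = 0. -/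
import Mathlib


open Finset

/-- A fixed point of the iterated best response scheme satisfying the KKT conditions of the
sensitivity-modified problems, with shared joint constraints (`γ₁(σᵢ,σⱼ) = γ₂(σⱼ,σᵢ)`, each
player's own strategy listed first) and `λᵢ ≥ αᵢ λⱼ` componentwise, satisfies — with the
modified multipliers `λᵢ* = λᵢ - αᵢ λⱼ` — the KKT necessary conditions for a Nash
equilibrium: stationarity, nonnegativity, and complementary slackness. -/
theorem ibr_fixed_point_nash_kkt {n m q : ℕ}
    (f₁ f₂ : EuclideanSpace ℝ (Fin n) → ℝ)
    (h₁ h₂ g₁ g₂ : EuclideanSpace ℝ (Fin n) → Fin m → ℝ)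
    (γ₁ γ₂ : EuclideanSpace ℝ (Fin n) → EuclideanSpace ℝ (Fin n) → Fin q → ℝ)
    (α₁ α₂ : ℝ) (hα₁ : 0 ≤ α₁) (hα₂ : 0 ≤ α₂)
    (σ₁ σ₂ : EuclideanSpace ℝ (Fin n))
    (μ₁ μ₂ : Fin m → ℝ) (ν₁ ν₂ : Fin m → ℝ) (lam₁ lam₂ : Fin q → ℝ)
    -- shared joint constraints (own strategy first in each player's constraint map)
    (hγ : ∀ a b, γ₁ a b = γ₂ b a)
    -- multiplier sign conditions of the modified problems
    (hν₁ : ∀ k, 0 ≤ ν₁ k) (hν₂ : ∀ k, 0 ≤ ν₂ k)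
    (hlam₁ : ∀ k, 0 ≤ lam₁ k) (hlam₂ : ∀ k, 0 ≤ lam₂ k)
    -- feasibility
    (hh₁ : ∀ k, h₁ σ₁ k = 0) (hh₂ : ∀ k, h₂ σ₂ k = 0)
    (hg₁ : ∀ k, g₁ σ₁ k ≤ 0) (hg₂ : ∀ k, g₂ σ₂ k ≤ 0)
    (hγ₁ : ∀ k, γ₁ σ₁ σ₂ k ≤ 0) (hγ₂ : ∀ k, γ₂ σ₂ σ₁ k ≤ 0)
    -- complementary slackness of the modified problems (componentwise)
    (hcslam₁ : ∀ k, lam₁ k * γ₁ σ₁ σ₂ k = 0) (hcslam₂ : ∀ k, lam₂ k * γ₂ σ₂ σ₁ k = 0)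
    (hcsν₁ : ∀ k, ν₁ k * g₁ σ₁ k = 0) (hcsν₂ : ∀ k, ν₂ k * g₂ σ₂ k = 0)
    -- stationarity of the modified problems
    (hstat₁ : fderiv ℝ f₁ σ₁
        + α₁ • ∑ k, lam₂ k • fderiv ℝ (fun σ => γ₂ σ₂ σ k) σ₁
        - ∑ k, lam₁ k • fderiv ℝ (fun σ => γ₁ σ σ₂ k) σ₁
        - ∑ k, μ₁ k • fderiv ℝ (fun σ => h₁ σ k) σ₁
        - ∑ k, ν₁ k • fderiv ℝ (fun σ => g₁ σ k) σ₁ = 0)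
    (hstat₂ : fderiv ℝ f₂ σ₂
        + α₂ • ∑ k, lam₁ k • fderiv ℝ (fun σ => γ₁ σ₁ σ k) σ₂
        - ∑ k, lam₂ k • fderiv ℝ (fun σ => γ₂ σ σ₁ k) σ₂
        - ∑ k, μ₂ k • fderiv ℝ (fun σ => h₂ σ k) σ₂
        - ∑ k, ν₂ k • fderiv ℝ (fun σ => g₂ σ k) σ₂ = 0)
    -- λᵢ ≥ αᵢ λⱼ componentwise
    (hdom₁ : ∀ k, α₁ * lam₂ k ≤ lam₁ k) (hdom₂ : ∀ k, α₂ * lam₁ k ≤ lam₂ k) :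
    -- the modified multipliers λᵢ* = λᵢ - αᵢ λⱼ satisfy the Nash KKT conditions
    (fderiv ℝ f₁ σ₁
        - ∑ k, (lam₁ k - α₁ * lam₂ k) • fderiv ℝ (fun σ => γ₁ σ σ₂ k) σ₁
        - ∑ k, μ₁ k • fderiv ℝ (fun σ => h₁ σ k) σ₁
        - ∑ k, ν₁ k • fderiv ℝ (fun σ => g₁ σ k) σ₁ = 0) ∧
    (fderiv ℝ f₂ σ₂
        - ∑ k, (lam₂ k - α₂ * lam₁ k) • fderiv ℝ (fun σ => γ₂ σ σ₁ k) σ₂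
        - ∑ k, μ₂ k • fderiv ℝ (fun σ => h₂ σ k) σ₂
        - ∑ k, ν₂ k • fderiv ℝ (fun σ => g₂ σ k) σ₂ = 0) ∧
    (∀ k, 0 ≤ lam₁ k - α₁ * lam₂ k) ∧ (∀ k, 0 ≤ lam₂ k - α₂ * lam₁ k) ∧
    (∀ k, (lam₁ k - α₁ * lam₂ k) * γ₁ σ₁ σ₂ k = 0) ∧
    (∀ k, (lam₂ k - α₂ * lam₁ k) * γ₂ σ₂ σ₁ k = 0) := by
  have hfun₁ : ∀ k, (fun σ => γ₂ σ₂ σ k) = (fun σ => γ₁ σ σ₂ k) := by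
    intro k; funext σ; rw [hγ]
  have hfun₂ : ∀ k, (fun σ => γ₁ σ₁ σ k) = (fun σ => γ₂ σ σ₁ k) := by
    intro k; funext σ; rw [hγ]
  have key₁ : ∑ k, (lam₁ k - α₁ * lam₂ k) • fderiv ℝ (fun σ => γ₁ σ σ₂ k) σ₁
      = ∑ k, lam₁ k • fderiv ℝ (fun σ => γ₁ σ σ₂ k) σ₁
        - α₁ • ∑ k, lam₂ k • fderiv ℝ (fun σ => γ₁ σ σ₂ k) σ₁ := by
    simp [sub_smul, Finset.sum_sub_distrib, Finset.smul_sum, smul_smul]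
  have key₂ : ∑ k, (lam₂ k - α₂ * lam₁ k) • fderiv ℝ (fun σ => γ₂ σ σ₁ k) σ₂
      = ∑ k, lam₂ k • fderiv ℝ (fun σ => γ₂ σ σ₁ k) σ₂
        - α₂ • ∑ k, lam₁ k • fderiv ℝ (fun σ => γ₂ σ σ₁ k) σ₂ := by
    simp [sub_smul, Finset.sum_sub_distrib, Finset.smul_sum, smul_smul]
  simp only [hfun₁] at hstat₁
  simp only [hfun₂] at hstat₂
  refine ⟨?_, ?_, fun k => by linarith [hdom₁ k], fun k => by linarith [hdom₂ k], ?_, ?_⟩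
  · rw [key₁]; rw [← hstat₁]; abel
  · rw [key₂]; rw [← hstat₂]; abel
  · intro k
    have h2 : lam₂ k * γ₁ σ₁ σ₂ k = 0 := by rw [hγ]; exact hcslam₂ k
    have h1 := hcslam₁ k
    linear_combination h1 - α₁ * h2
  · intro k
    have h1 : lam₁ k * γ₂ σ₂ σ₁ k = 0 := by rw [← hγ]; exact hcslam₁ k
    have h2 := hcslam₂ k
    linear_combination h2 - α₂ * h1
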